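/- Let n ≥ 1. Let D be the closed unit ball of EuclideanSpace ℝ (Fin n), equipped with the equivalence relation in which x ≈ y if and only if x = y, or ‖x‖ = 1 and y = −x (antipodal identification on the boundary sphere only). Let ℝP^n be the quotient of the unit sphere of EuclideanSpace ℝ (Fin (n+1)) by the equivalence relation identifying x with −x. Then the quotient space D/≈ is homeomorphic to ℝP^n. -/

import Mathlib

/-- Real projective space `ℝP^n`: the quotient of the unit sphere of
`EuclideanSpace ℝ (Fin (n+1))` by the antipodal identification `x ∼ -x`. -/
abbrev RP (n : ℕ) : Type :=
  Quot (fun x y : Metric.sphere (0 : EuclideanSpace ℝ (Fin (n + 1))) 1 =>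
    (x : EuclideanSpace ℝ (Fin (n + 1))) = -(y : EuclideanSpace ℝ (Fin (n + 1))))

/-- The closed unit disk of `EuclideanSpace ℝ (Fin n)` with antipodal points of
its boundary sphere identified. -/
abbrev DiskModBoundary (n : ℕ) : Type :=
  Quot (fun x y : Metric.closedBall (0 : EuclideanSpace ℝ (Fin n)) 1 =>
    ‖(x : EuclideanSpace ℝ (Fin n))‖ = 1 ∧
      (y : EuclideanSpace ℝ (Fin n)) = -(x : EuclideanSpace ℝ (Fin n)))

namespace DiskRPAux

open Metric

variable {n : ℕ}

/-- Append a coordinate to a Euclidean vector. -/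
def esnoc (x : EuclideanSpace ℝ (Fin n)) (t : ℝ) : EuclideanSpace ℝ (Fin (n + 1)) :=
  WithLp.toLp 2 (Fin.snoc (α := fun _ => ℝ) x.ofLp t)

/-- Drop the last coordinate of a Euclidean vector. -/
def einit (y : EuclideanSpace ℝ (Fin (n + 1))) : EuclideanSpace ℝ (Fin n) :=
  WithLp.toLp 2 (Fin.init y.ofLp)

theorem norm_sq_eq {m : ℕ} (x : EuclideanSpace ℝ (Fin m)) : ‖x‖ ^ 2 = ∑ i, x i ^ 2 := by
  rw [EuclideanSpace.norm_eq, Real.sq_sqrt (Finset.sum_nonneg fun i _ => sq_nonneg _)]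
  simp [Real.norm_eq_abs, sq_abs]

theorem norm_sq_esnoc (x : EuclideanSpace ℝ (Fin n)) (t : ℝ) :
    ‖esnoc x t‖ ^ 2 = ‖x‖ ^ 2 + t ^ 2 := by
  rw [norm_sq_eq, norm_sq_eq, Fin.sum_univ_castSucc]
  simp [esnoc]

theorem esnoc_einit (y : EuclideanSpace ℝ (Fin (n + 1))) :
    esnoc (einit y) (y (Fin.last n)) = y :=
  by simp only [esnoc, einit, WithLp.ofLp_toLp, Fin.snoc_init_self, WithLp.toLp_ofLp]

theorem norm_sq_split (y : EuclideanSpace ℝ (Fin (n + 1))) :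
    ‖y‖ ^ 2 = ‖einit y‖ ^ 2 + (y (Fin.last n)) ^ 2 := by
  conv_lhs => rw [← esnoc_einit y]
  exact norm_sq_esnoc _ _

theorem esnoc_neg (x : EuclideanSpace ℝ (Fin n)) (t : ℝ) :
    esnoc (-x) (-t) = -esnoc x t := by
  ext i
  refine Fin.lastCases ?_ (fun j => ?_) i <;> simp [esnoc, PiLp.neg_apply]

theorem einit_neg (y : EuclideanSpace ℝ (Fin (n + 1))) : einit (-y) = -einit y := by
  ext i
  simp [einit, Fin.init, PiLp.neg_apply]

theorem continuous_esnoc {α : Type*} [TopologicalSpace α]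
    {f : α → EuclideanSpace ℝ (Fin n)} {g : α → ℝ} (hf : Continuous f) (hg : Continuous g) :
    Continuous fun a => esnoc (f a) (g a) := by
  have : (fun a => esnoc (f a) (g a)) =
      (WithLp.equiv 2 (Fin (n + 1) → ℝ)).symm ∘
        fun a => (Fin.snoc (f a) (g a) : Fin (n + 1) → ℝ) := rfl
  rw [this]
  refine (PiLp.continuous_toLp 2 _).comp (continuous_pi fun i => ?_)
  refine Fin.lastCases ?_ (fun j => ?_) i
  · simpa [Fin.snoc_last] using hg
  · simp only [Fin.snoc_castSucc]
    exact (continuous_apply j).comp ((PiLp.continuous_ofLp 2 _).comp hf)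

theorem continuous_einit {α : Type*} [TopologicalSpace α]
    {f : α → EuclideanSpace ℝ (Fin (n + 1))} (hf : Continuous f) :
    Continuous fun a => einit (f a) := by
  have : (fun a => einit (f a)) =
      (WithLp.equiv 2 (Fin n → ℝ)).symm ∘ fun a i => f a i.castSucc := rfl
  rw [this]
  exact (PiLp.continuous_toLp 2 _).comp (continuous_pi fun i =>
    (continuous_apply (Fin.castSucc i)).comp ((PiLp.continuous_ofLp 2 _).comp hf))

/-- The map sending a point of the closed disk to the upper hemisphere. -/
noncomputable def toSphere (x : Metric.closedBall (0 : EuclideanSpace ℝ (Fin n)) 1) :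
    Metric.sphere (0 : EuclideanSpace ℝ (Fin (n + 1))) 1 := by
  refine ⟨esnoc (x : EuclideanSpace ℝ (Fin n))
    (Real.sqrt (1 - ‖(x : EuclideanSpace ℝ (Fin n))‖ ^ 2)), ?_⟩
  have hx : ‖(x : EuclideanSpace ℝ (Fin n))‖ ≤ 1 := mem_closedBall_zero_iff.mp x.2
  have hx2 : ‖(x : EuclideanSpace ℝ (Fin n))‖ ^ 2 ≤ 1 := by
    nlinarith [norm_nonneg (x : EuclideanSpace ℝ (Fin n))]
  rw [mem_sphere_zero_iff_norm, ← Real.sqrt_sq (norm_nonneg _), norm_sq_esnoc,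
    Real.sq_sqrt (by linarith)]
  norm_num

/-- Projection from the sphere to the disk, dropping the last coordinate. -/
def toDisk (y : Metric.sphere (0 : EuclideanSpace ℝ (Fin (n + 1))) 1) :
    Metric.closedBall (0 : EuclideanSpace ℝ (Fin n)) 1 := by
  refine ⟨einit (y : EuclideanSpace ℝ (Fin (n + 1))), ?_⟩
  have hy : ‖(y : EuclideanSpace ℝ (Fin (n + 1)))‖ = 1 := mem_sphere_zero_iff_norm.mp y.2
  have h2 : ‖einit (y : EuclideanSpace ℝ (Fin (n + 1)))‖ ^ 2 ≤ 1 := by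
    have := norm_sq_split (y : EuclideanSpace ℝ (Fin (n + 1)))
    rw [hy] at this
    nlinarith [sq_nonneg ((y : EuclideanSpace ℝ (Fin (n + 1))) (Fin.last n))]
  rw [mem_closedBall_zero_iff]
  nlinarith [norm_nonneg (einit (y : EuclideanSpace ℝ (Fin (n + 1))))]

theorem norm_sq_toDisk (y : Metric.sphere (0 : EuclideanSpace ℝ (Fin (n + 1))) 1) :
    ‖(toDisk y : EuclideanSpace ℝ (Fin n))‖ ^ 2 =
      1 - ((y : EuclideanSpace ℝ (Fin (n + 1))) (Fin.last n)) ^ 2 := by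
  have hy : ‖(y : EuclideanSpace ℝ (Fin (n + 1)))‖ = 1 := mem_sphere_zero_iff_norm.mp y.2
  have := norm_sq_split (y : EuclideanSpace ℝ (Fin (n + 1)))
  rw [hy] at this
  simp only [toDisk]
  linarith

/-- Negation on the sphere. -/
def negS (y : Metric.sphere (0 : EuclideanSpace ℝ (Fin (n + 1))) 1) :
    Metric.sphere (0 : EuclideanSpace ℝ (Fin (n + 1))) 1 :=
  ⟨-(y : EuclideanSpace ℝ (Fin (n + 1))), by
    rw [mem_sphere_zero_iff_norm, norm_neg]
    exact mem_sphere_zero_iff_norm.mp y.2⟩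

theorem toDisk_congr {y z : Metric.sphere (0 : EuclideanSpace ℝ (Fin (n + 1))) 1}
    (h : (y : EuclideanSpace ℝ (Fin (n + 1))) = (z : EuclideanSpace ℝ (Fin (n + 1)))) :
    toDisk y = toDisk z := by
  apply Subtype.ext
  simp only [toDisk, h]

/-- The forward map. -/
noncomputable def fwd : DiskModBoundary n → RP n :=
  Quot.lift (fun x => Quot.mk _ (toSphere x)) (by
    rintro a b ⟨ha, hb⟩
    apply Quot.sound
    show (toSphere a : EuclideanSpace ℝ (Fin (n + 1))) = -(toSphere b : _)
    simp only [toSphere]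
    rw [hb, norm_neg, ha, ← esnoc_neg]
    norm_num)

/-- The backward map on the sphere. -/
noncomputable def bwdFun (y : Metric.sphere (0 : EuclideanSpace ℝ (Fin (n + 1))) 1) :
    DiskModBoundary n :=
  if (0 : ℝ) ≤ (y : EuclideanSpace ℝ (Fin (n + 1))) (Fin.last n) then
    Quot.mk _ (toDisk y)
  else
    Quot.mk _ (toDisk (negS y))

theorem bwdFun_agree (y : Metric.sphere (0 : EuclideanSpace ℝ (Fin (n + 1))) 1)
    (h : (y : EuclideanSpace ℝ (Fin (n + 1))) (Fin.last n) = 0) :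
    (Quot.mk _ (toDisk y) : DiskModBoundary n) = Quot.mk _ (toDisk (negS y)) := by
  apply Quot.sound
  constructor
  · have h1 : ‖(toDisk y : EuclideanSpace ℝ (Fin n))‖ ^ 2 = 1 := by
      rw [norm_sq_toDisk, h]; norm_num
    rw [← Real.sqrt_sq (norm_nonneg (toDisk y : EuclideanSpace ℝ (Fin n))), h1, Real.sqrt_one]
  · show (toDisk (negS y) : EuclideanSpace ℝ (Fin n)) = -(toDisk y : _)
    simp only [toDisk, negS]
    exact einit_neg _

theorem bwdFun_welldef (a b : Metric.sphere (0 : EuclideanSpace ℝ (Fin (n + 1))) 1)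
    (hab : (a : EuclideanSpace ℝ (Fin (n + 1))) = -(b : EuclideanSpace ℝ (Fin (n + 1)))) :
    bwdFun a = bwdFun b := by
  have hlast : (a : EuclideanSpace ℝ (Fin (n + 1))) (Fin.last n) =
      -((b : EuclideanSpace ℝ (Fin (n + 1))) (Fin.last n)) := by
    rw [hab]; simp [PiLp.neg_apply]
  have hnegS_a : ((negS a : Metric.sphere (0 : EuclideanSpace ℝ (Fin (n+1))) 1) :
      EuclideanSpace ℝ (Fin (n + 1))) = (b : EuclideanSpace ℝ (Fin (n + 1))) := by
    simp only [negS, hab, neg_neg]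
  have hnegS_b : ((negS b : Metric.sphere (0 : EuclideanSpace ℝ (Fin (n+1))) 1) :
      EuclideanSpace ℝ (Fin (n + 1))) = (a : EuclideanSpace ℝ (Fin (n + 1))) := by
    simp only [negS, hab]
  unfold bwdFun
  by_cases ha : (0 : ℝ) ≤ (a : EuclideanSpace ℝ (Fin (n + 1))) (Fin.last n) <;>
    by_cases hb : (0 : ℝ) ≤ (b : EuclideanSpace ℝ (Fin (n + 1))) (Fin.last n)
  · -- both nonneg: last coords are 0
    rw [if_pos ha, if_pos hb]
    have h0 : (b : EuclideanSpace ℝ (Fin (n + 1))) (Fin.last n) = 0 := by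
      rw [hlast] at ha; linarith
    rw [bwdFun_agree b h0]
    exact congrArg _ (toDisk_congr hnegS_b.symm)
  · rw [if_pos ha, if_neg hb]
    exact congrArg _ (toDisk_congr hnegS_b.symm)
  · rw [if_neg ha, if_pos hb]
    exact congrArg _ (toDisk_congr hnegS_a)
  · exfalso; rw [hlast] at ha; push_neg at ha hb; linarith

/-- The backward map. -/
noncomputable def bwd : RP n → DiskModBoundary n :=
  Quot.lift bwdFun bwdFun_welldef

theorem toSphere_toDisk (y : Metric.sphere (0 : EuclideanSpace ℝ (Fin (n + 1))) 1)
    (h : (0 : ℝ) ≤ (y : EuclideanSpace ℝ (Fin (n + 1))) (Fin.last n)) :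
    toSphere (toDisk y) = y := by
  apply Subtype.ext
  show esnoc _ _ = _
  have h1 : Real.sqrt (1 - ‖(toDisk y : EuclideanSpace ℝ (Fin n))‖ ^ 2) =
      (y : EuclideanSpace ℝ (Fin (n + 1))) (Fin.last n) := by
    rw [norm_sq_toDisk,
      show (1 : ℝ) - (1 - ((y : EuclideanSpace ℝ (Fin (n+1))) (Fin.last n)) ^ 2) =
        ((y : EuclideanSpace ℝ (Fin (n+1))) (Fin.last n)) ^ 2 by ring,
      Real.sqrt_sq h]
  rw [h1]
  exact esnoc_einit _

theorem continuous_toDisk :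
    Continuous (toDisk : Metric.sphere (0 : EuclideanSpace ℝ (Fin (n + 1))) 1 → _) := by
  apply Continuous.subtype_mk
  exact continuous_einit continuous_subtype_val

theorem continuous_negS :
    Continuous (negS : Metric.sphere (0 : EuclideanSpace ℝ (Fin (n + 1))) 1 → _) := by
  apply Continuous.subtype_mk
  exact continuous_subtype_val.neg

theorem continuous_toSphere :
    Continuous (toSphere : Metric.closedBall (0 : EuclideanSpace ℝ (Fin n)) 1 → _) := by
  apply Continuous.subtype_mk
  exact continuous_esnoc continuous_subtype_val
    ((continuous_const.sub (continuous_subtype_val.norm.pow 2)).sqrt)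

theorem continuous_bwdFun :
    Continuous (bwdFun : Metric.sphere (0 : EuclideanSpace ℝ (Fin (n + 1))) 1 →
      DiskModBoundary n) := by
  unfold bwdFun
  refine Continuous.if_le ?_ ?_ continuous_const ?_ ?_
  · exact continuous_quot_mk.comp continuous_toDisk
  · exact continuous_quot_mk.comp (continuous_toDisk.comp continuous_negS)
  · exact (continuous_apply (Fin.last n)).comp
      ((PiLp.continuous_ofLp 2 _).comp continuous_subtype_val)
  · intro y hy
    exact bwdFun_agree y hy.symm

end DiskRPAux

/-- The closed `n`-disk with antipodal boundary points identified is homeomorphic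
to real projective `n`-space. -/
theorem diskModBoundary_homeomorph_projectiveSpace (n : ℕ) (hn : 1 ≤ n) :
    Nonempty (DiskModBoundary n ≃ₜ RP n) := by
  open DiskRPAux in
  refine ⟨⟨⟨fwd, bwd, ?_, ?_⟩, ?_, ?_⟩⟩
  · -- left inverse
    intro d
    induction d using Quot.ind with
    | _ x =>
      show bwdFun (toSphere x) = Quot.mk _ x
      have hpos : (0 : ℝ) ≤ ((toSphere x : Metric.sphere (0 : EuclideanSpace ℝ (Fin (n+1))) 1) :
          EuclideanSpace ℝ (Fin (n + 1))) (Fin.last n) := by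
        show (0 : ℝ) ≤ esnoc _ _ (Fin.last n)
        simp only [esnoc, Fin.snoc_last]
        exact Real.sqrt_nonneg _
      rw [bwdFun, if_pos hpos]
      congr 1
      apply Subtype.ext
      show einit (esnoc _ _) = _
      simp only [esnoc, einit, Fin.init_snoc]
  · -- right inverse
    intro p
    induction p using Quot.ind with
    | _ y =>
      show fwd (bwdFun y) = Quot.mk _ y
      by_cases h : (0 : ℝ) ≤ (y : EuclideanSpace ℝ (Fin (n + 1))) (Fin.last n)
      · rw [bwdFun, if_pos h]
        show Quot.mk _ (toSphere (toDisk y)) = _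
        rw [toSphere_toDisk y h]
      · rw [bwdFun, if_neg h]
        show Quot.mk _ (toSphere (toDisk (negS y))) = _
        have hneg : (0 : ℝ) ≤ ((negS y : Metric.sphere (0 : EuclideanSpace ℝ (Fin (n+1))) 1) :
            EuclideanSpace ℝ (Fin (n + 1))) (Fin.last n) := by
          show (0 : ℝ) ≤ (-(y : EuclideanSpace ℝ (Fin (n+1)))) (Fin.last n)
          push_neg at h
          simp only [PiLp.neg_apply]
          linarith
        rw [toSphere_toDisk (negS y) hneg]
        exact Quot.sound rfl
  · exact continuous_quot_lift _ (continuous_quot_mk.comp continuous_toSphere)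
  · exact continuous_quot_lift _ continuous_bwdFun
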